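/- In the uniform metric on n = k + t points (t = ⌊√k⌋) with a group for every t-subset, the fractional solution y_u = k/n for all u, x_{uu} = k/n, x_{u,v_u} = t/n for some fixed v_u ≠ u, satisfies the LP constraints (Σ_v x_{uv} = 1, Σ_v y_v ≤ k, x_{uv} ≤ y_v, nonnegativity) and has LP cost max_A Σ_{u∈A} Σ_v d(u,v)^p·x_{uv} = t²/n ≤ 1. -/

import Mathlib

theorem stmt17 {P : Type*} [MetricSpace P] [Fintype P] [DecidableEq P]
    (k : ℕ) (hk : 1 ≤ k) (hcard : Fintype.card P = k + Nat.sqrt k)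
    (huniform : ∀ u v : P, u ≠ v → dist u v = 1)
    (p : ℝ) (hp : 1 ≤ p)
    (vsel : P → P) (hvsel : ∀ u, vsel u ≠ u)
    (x : P → P → ℝ) (y : P → ℝ)
    (hx : ∀ u v, x u v = if v = u then (k : ℝ) / (Fintype.card P : ℝ)
      else if v = vsel u then (Nat.sqrt k : ℝ) / (Fintype.card P : ℝ) else 0)
    (hy : ∀ v, y v = (k : ℝ) / (Fintype.card P : ℝ)) :
    (∀ u v, 0 ≤ x u v) ∧ (∀ u, ∑ v, x u v = 1) ∧ (∑ v, y v ≤ (k : ℝ)) ∧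
      (∀ u v, x u v ≤ y v) ∧
      (∀ A : Finset P, A.card = Nat.sqrt k →
        ∑ u ∈ A, ∑ v, dist u v ^ p * x u v = (Nat.sqrt k : ℝ) ^ 2 / (Fintype.card P : ℝ)) ∧
      (Nat.sqrt k : ℝ) ^ 2 / (Fintype.card P : ℝ) ≤ 1 := by
  have hn0 : 0 < (Fintype.card P : ℝ) := by
    rw [hcard]; positivity
  have hinner : ∀ u, ∑ v, dist u v ^ p * x u v
      = (Nat.sqrt k : ℝ) / (Fintype.card P : ℝ) := by
    intro u
    have hpair : ({u, vsel u} : Finset P) ⊆ Finset.univ := Finset.subset_univ _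
    rw [← Finset.sum_subset hpair (by
      intro v _ hv
      simp only [Finset.mem_insert, Finset.mem_singleton, not_or] at hv
      rw [hx]
      rw [if_neg hv.1, if_neg hv.2, mul_zero])]
    rw [Finset.sum_pair (hvsel u).symm]
    rw [hx, hx, dist_self, if_pos rfl, if_neg (hvsel u), if_pos rfl,
      huniform u (vsel u) (Ne.symm (hvsel u))]
    rw [Real.zero_rpow (by linarith), Real.one_rpow]
    ring
  refine ⟨?_, ?_, ?_, ?_, ?_, ?_⟩
  · intro u v
    rw [hx]
    split_ifs <;> positivity
  · intro u
    have hpair : ({u, vsel u} : Finset P) ⊆ Finset.univ := Finset.subset_univ _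
    rw [← Finset.sum_subset hpair (by
      intro v _ hv
      simp only [Finset.mem_insert, Finset.mem_singleton, not_or] at hv
      rw [hx, if_neg hv.1, if_neg hv.2])]
    rw [Finset.sum_pair (hvsel u).symm, hx, hx, if_pos rfl, if_neg (hvsel u), if_pos rfl]
    rw [← add_div, div_eq_one_iff_eq (ne_of_gt hn0), hcard]
    push_cast; ring
  · have : ∑ v : P, y v = (Fintype.card P : ℝ) * ((k : ℝ) / (Fintype.card P : ℝ)) := by
      rw [Finset.sum_congr rfl (fun v _ => hy v), Finset.sum_const, Finset.card_univ,
        nsmul_eq_mul]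
    rw [this, mul_div_cancel₀ _ (ne_of_gt hn0)]
  · intro u v
    rw [hx, hy]
    have hle : (Nat.sqrt k : ℝ) ≤ (k : ℝ) := by exact_mod_cast Nat.sqrt_le_self k
    split_ifs
    · exact le_rfl
    · gcongr
    · positivity
  · intro A hA
    rw [Finset.sum_congr rfl (fun u _ => hinner u), Finset.sum_const, hA, nsmul_eq_mul]
    ring
  · rw [div_le_one hn0, hcard]
    push_cast
    have h2 := Nat.sqrt_le_self k
    have hsq : Nat.sqrt k ^ 2 ≤ k := Nat.sqrt_le' k
    have : (Nat.sqrt k : ℝ) ^ 2 ≤ (k : ℝ) := by exact_mod_cast hsq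
    have h3 : (0:ℝ) ≤ (Nat.sqrt k : ℝ) := Nat.cast_nonneg _
    linarith
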